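/- Let m ≥ 3, n ≥ 1 and k ≥ 0. The number of proper colorings of the signed book graph (B(m,n), σ_1) with color set {−k,…,−1,0,1,…,k} equals (2k)^m · γ_m(2k+1)^{n−1}. -/

import Mathlib

/-- Vertices of the book graph `B(m,n)`: `Sum.inl false` is `u`, `Sum.inl true` is `v`,
and `Sum.inr (i, j)` is the vertex `u_{j+1}^{i+1}`. -/
abbrev BookVertex (m n : ℕ) := Bool ⊕ (Fin n × Fin (m - 2))

/-- Adjacency relation of the book graph `B(m,n)`. -/
def bookAdj (m n : ℕ) : BookVertex m n → BookVertex m n → Prop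
  | Sum.inl a, Sum.inl b => a ≠ b
  | Sum.inl false, Sum.inr (_, j) => j.val = 0
  | Sum.inl true, Sum.inr (_, j) => j.val = m - 3
  | Sum.inr (_, j), Sum.inl false => j.val = 0
  | Sum.inr (_, j), Sum.inl true => j.val = m - 3
  | Sum.inr (i, j), Sum.inr (i', j') => i = i' ∧ (j.val + 1 = j'.val ∨ j'.val + 1 = j.val)

/-- The signature `σ_l` of `B(m,n)`: exactly the edges `u u_1^1, …, u u_1^l` are negative. -/
def sigmaL (m n l : ℕ) : BookVertex m n → BookVertex m n → ℤ
  | Sum.inl false, Sum.inr (i, j) => if j.val = 0 ∧ i.val < l then -1 else 1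
  | Sum.inr (i, j), Sum.inl false => if j.val = 0 ∧ i.val < l then -1 else 1
  | _, _ => 1

/-- The signature of `B^{uv}(m,n)`: exactly the edge `uv` is negative. -/
def sigmaUV (m n : ℕ) : BookVertex m n → BookVertex m n → ℤ
  | Sum.inl _, Sum.inl _ => -1
  | _, _ => 1

/-- `γ_m(x) = ∑_{i=0}^{m-2} (-1)^i (x-1)^{m-2-i}`. -/
def gammaP (m : ℕ) (x : ℤ) : ℤ := ∑ i ∈ Finset.range (m - 1), (-1) ^ i * (x - 1) ^ (m - 2 - i)

abbrev CC (k : ℕ) : Type := ↥(Finset.Icc (-(k:ℤ)) (k:ℤ))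

def pOK (a : ℤ) : ∀ {t : ℕ}, (Fin t → ℤ) → ℤ → Prop
  | 0, _, b => a ≠ b
  | t+1, g, b => pOK a (fun j : Fin t => g j.castSucc) (g (Fin.last t)) ∧ g (Fin.last t) ≠ b

@[simp] lemma pOK_zero (a b : ℤ) (g : Fin 0 → ℤ) : pOK a g b ↔ a ≠ b := Iff.rfl

lemma pOK_succ (a b : ℤ) {t : ℕ} (g : Fin (t+1) → ℤ) :
    pOK a g b ↔ pOK a (fun j : Fin t => g j.castSucc) (g (Fin.last t)) ∧ g (Fin.last t) ≠ b :=
  Iff.rfl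

noncomputable def Npath (k t : ℕ) (a b : ℤ) : ℕ :=
  Nat.card {g : Fin t → CC k // pOK a (fun j => (g j : ℤ)) b}

def Dcl (k t : ℕ) : ℤ := ∑ i ∈ Finset.range (t+1), (-1:ℤ)^i * (2*k)^(t-i)

@[simp] lemma Dcl_zero (k : ℕ) : Dcl k 0 = 1 := by simp [Dcl]

lemma Dcl_succ (k t : ℕ) : Dcl k (t+1) = (2*(k:ℤ))^(t+1) - Dcl k t := by
  have : Dcl k (t+1) = (∑ i ∈ Finset.range (t+1), (-1:ℤ)^(i+1) * (2*k)^(t+1-(i+1)))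
      + (-1:ℤ)^0 * (2*(k:ℤ))^(t+1-0) := Finset.sum_range_succ' _ _
  rw [this]
  have h2 : ∀ i ∈ Finset.range (t+1), (-1:ℤ)^(i+1) * (2*(k:ℤ))^(t+1-(i+1))
      = -((-1:ℤ)^i * (2*(k:ℤ))^(t-i)) := by
    intro i _
    rw [pow_succ]
    have : t+1-(i+1) = t - i := by omega
    rw [this]; ring
  rw [Finset.sum_congr rfl h2, Finset.sum_neg_distrib]
  simp [Dcl]; ring

lemma Dcl_mul (k t : ℕ) : (2*(k:ℤ)+1) * Dcl k t = (2*(k:ℤ))^(t+1) + (-1)^t := by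
  induction t with
  | zero => simp
  | succ t ih =>
    rw [Dcl_succ]
    have : ((2:ℤ)*k)^(t+2) = (2*(k:ℤ)) * (2*k)^(t+1) := by ring
    rw [pow_succ (-1:ℤ) t]
    nlinarith [ih]

lemma Dcl_succ' (k t : ℕ) : Dcl k (t+1) = 2*(k:ℤ) * Dcl k t + (-1)^(t+1) := by
  have h1 := Dcl_succ k t
  have h2 := Dcl_mul k t
  rw [pow_succ (-1:ℤ) t]
  linarith

lemma natCard_subtype_and {α : Type*} (P : α → Prop) (q : Prop) [Decidable q] :
    Nat.card {x : α // P x ∧ q} = if q then Nat.card {x : α // P x} else 0 := by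
  by_cases hq : q
  · rw [if_pos hq]
    exact Nat.card_congr (Equiv.subtypeEquivRight fun x => by simp [hq])
  · rw [if_neg hq]
    haveI : IsEmpty {x : α // P x ∧ q} := ⟨fun x => hq x.2.2⟩
    exact Nat.card_of_isEmpty

lemma natCard_sigma {ι : Type*} [Fintype ι] (f : ι → Type*) [∀ i, Finite (f i)] :
    Nat.card (Σ i, f i) = ∑ i, Nat.card (f i) := by
  letI : ∀ i, Fintype (f i) := fun i => Fintype.ofFinite _
  simp [Nat.card_eq_fintype_card]

lemma Npath_zero (k : ℕ) (a b : ℤ) : Npath k 0 a b = if a = b then 0 else 1 := by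
  by_cases h : a = b
  · rw [if_pos h]
    haveI : IsEmpty {g : Fin 0 → CC k // pOK a (fun j => (g j : ℤ)) b} :=
      ⟨fun g => g.2 h⟩
    exact Nat.card_of_isEmpty
  · rw [if_neg h]
    haveI : Unique {g : Fin 0 → CC k // pOK a (fun j => (g j : ℤ)) b} :=
      ⟨⟨⟨fun j => j.elim0, h⟩⟩, fun g => Subtype.ext (funext fun j => j.elim0)⟩
    exact Nat.card_unique

noncomputable def pathEquiv (k t : ℕ) (a b : ℤ) :
    {g : Fin (t+1) → CC k // pOK a (fun j => (g j : ℤ)) b} ≃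
      Σ c : CC k, {g : Fin t → CC k // pOK a (fun j => (g j : ℤ)) (c:ℤ) ∧ (c:ℤ) ≠ b} where
  toFun G := ⟨G.1 (Fin.last t), ⟨Fin.init G.1, G.2.1, G.2.2⟩⟩
  invFun q := ⟨Fin.snoc q.2.1 q.1, by
    rw [pOK_succ]
    simp only [Fin.snoc_castSucc, Fin.snoc_last]
    exact ⟨q.2.2.1, q.2.2.2⟩⟩
  left_inv G := Subtype.ext (Fin.snoc_init_self G.1)
  right_inv q := by apply Sigma.subtype_ext <;> simp

lemma Npath_succ (k t : ℕ) (a b : ℤ) :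
    Npath k (t+1) a b = ∑ c : CC k, if (c:ℤ) ≠ b then Npath k t a (c:ℤ) else 0 := by
  rw [Npath, Nat.card_congr (pathEquiv k t a b), natCard_sigma]
  refine Finset.sum_congr rfl fun c _ => ?_
  rw [natCard_subtype_and]
  rfl

lemma card_Icc_k (k : ℕ) : (Finset.Icc (-(k:ℤ)) (k:ℤ)).card = 2*k+1 := by
  rw [Int.card_Icc]; omega

lemma Npath_eq (k t : ℕ) {a b : ℤ} (ha : |a| ≤ (k:ℤ)) (hb : |b| ≤ (k:ℤ)) :
    (Npath k t a b : ℤ) = if a = b then Dcl k t - (-1)^t else Dcl k t := by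
  induction t generalizing b with
  | zero => rw [Npath_zero]; split_ifs <;> simp
  | succ t ih =>
    have hbm : b ∈ Finset.Icc (-(k:ℤ)) (k:ℤ) := by
      rw [Finset.mem_Icc]; exact abs_le.mp hb
    have ham : a ∈ Finset.Icc (-(k:ℤ)) (k:ℤ) := by
      rw [Finset.mem_Icc]; exact abs_le.mp ha
    rw [Npath_succ]
    have step1 : ((∑ c : CC k, if (c:ℤ) ≠ b then Npath k t a (c:ℤ) else 0 : ℕ) : ℤ)
        = ∑ z ∈ Finset.Icc (-(k:ℤ)) (k:ℤ),
            (if z ≠ b then (if a = z then Dcl k t - (-1)^t else Dcl k t) else 0) := by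
      push_cast
      rw [← Finset.sum_coe_sort (Finset.Icc (-(k:ℤ)) (k:ℤ))
        (fun z => if z ≠ b then (if a = z then Dcl k t - (-1)^t else Dcl k t) else 0)]
      refine Finset.sum_congr rfl fun c _ => ?_
      by_cases hc : (c:ℤ) ≠ b
      · rw [if_pos hc, if_pos hc, ih (abs_le.mpr (Finset.mem_Icc.mp c.2))]
      · rw [if_neg hc, if_neg hc]
    rw [step1, ← Finset.sum_filter, Finset.filter_ne' _ b]
    have step2 : ∀ z ∈ (Finset.Icc (-(k:ℤ)) (k:ℤ)).erase b,
        (if a = z then Dcl k t - (-1)^t else Dcl k t)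
          = Dcl k t + (if a = z then -(-1)^t else 0) := by
      intro z _; split_ifs <;> ring
    rw [Finset.sum_congr rfl step2, Finset.sum_add_distrib, Finset.sum_const,
      Finset.sum_ite_eq, Finset.card_erase_of_mem hbm, card_Icc_k]
    have hmem : a ∈ (Finset.Icc (-(k:ℤ)) (k:ℤ)).erase b ↔ a ≠ b := by
      rw [Finset.mem_erase]; exact ⟨fun h => h.1, fun h => ⟨h, ham⟩⟩
    have hD := Dcl_succ' k t
    by_cases hab : a = b
    · rw [if_pos hab, if_neg (by rw [hmem]; exact fun h => h hab)]
      rw [hD]; rw [pow_succ (-1:ℤ) t]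
      push_cast
      ring_nf
    · rw [if_neg hab, if_pos (hmem.mpr hab)]
      rw [hD, pow_succ (-1:ℤ) t]
      push_cast
      ring_nf

lemma pOK_iff {t : ℕ} (ht : 0 < t) (a b : ℤ) (g : Fin t → ℤ) :
    pOK a g b ↔ (a ≠ g ⟨0, ht⟩ ∧
      (∀ (j : ℕ) (h : j + 1 < t), g ⟨j, by omega⟩ ≠ g ⟨j+1, h⟩) ∧
      g ⟨t-1, by omega⟩ ≠ b) := by
  induction t generalizing b with
  | zero => omega
  | succ t iht =>
    rcases Nat.eq_zero_or_pos t with rfl | ht'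
    · rw [pOK_succ]
      simp only [pOK_zero]
      constructor
      · rintro ⟨h1, h2⟩
        exact ⟨h1, fun j h => absurd h (by omega), h2⟩
      · rintro ⟨h1, _, h3⟩
        exact ⟨h1, h3⟩
    · rw [pOK_succ, iht ht']
      constructor
      · rintro ⟨⟨h1, h2, h3⟩, h4⟩
        refine ⟨h1, ?_, h4⟩
        intro j hj
        rcases Nat.lt_or_ge (j+1) t with hlt | hge
        · exact h2 j hlt
        · have hj1 : j = t - 1 := by omega
          subst hj1
          convert h3 using 2
          all_goals exact Fin.ext (by simp <;> omega)
      · rintro ⟨h1, h2, h3⟩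
        refine ⟨⟨h1, fun j hj => h2 j (by omega), ?_⟩, h3⟩
        convert h2 (t-1) (by omega) using 2
        all_goals exact Fin.ext (by simp <;> omega)

section SigmaSimp
variable {m n l : ℕ}
@[simp] lemma sigmaL_ff (i : Fin n) (j : Fin (m-2)) :
    sigmaL m n l (Sum.inl false) (Sum.inr (i, j)) = if j.val = 0 ∧ i.val < l then -1 else 1 := rfl
@[simp] lemma sigmaL_ff' (i : Fin n) (j : Fin (m-2)) :
    sigmaL m n l (Sum.inr (i, j)) (Sum.inl false) = if j.val = 0 ∧ i.val < l then -1 else 1 := rfl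
@[simp] lemma sigmaL_tt (i : Fin n) (j : Fin (m-2)) :
    sigmaL m n l (Sum.inl true) (Sum.inr (i, j)) = 1 := rfl
@[simp] lemma sigmaL_tt' (i : Fin n) (j : Fin (m-2)) :
    sigmaL m n l (Sum.inr (i, j)) (Sum.inl true) = 1 := rfl
@[simp] lemma sigmaL_ll (x y : Bool) : sigmaL m n l (Sum.inl x) (Sum.inl y) = 1 := by
  cases x <;> cases y <;> rfl
@[simp] lemma sigmaL_rr (i i' : Fin n) (j j' : Fin (m-2)) :
    sigmaL m n l (Sum.inr (i, j)) (Sum.inr (i', j')) = 1 := rfl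
end SigmaSimp

def unmix {m n : ℕ} (a b : ℤ) (g : Fin n → Fin (m-2) → ℤ) : BookVertex m n → ℤ
  | Sum.inl false => a
  | Sum.inl true => b
  | Sum.inr (i, j) => g i j

section UnmixSimp
variable {m n : ℕ} (a b : ℤ) (g : Fin n → Fin (m-2) → ℤ)
@[simp] lemma unmix_f : unmix a b g (Sum.inl false) = a := rfl
@[simp] lemma unmix_t : unmix a b g (Sum.inl true) = b := rfl
@[simp] lemma unmix_r (i : Fin n) (j : Fin (m-2)) : unmix a b g (Sum.inr (i, j)) = g i j := rfl
end UnmixSimp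

lemma proper_iff {m n : ℕ} (hm : 3 ≤ m) (a b : ℤ) (g : Fin n → Fin (m-2) → ℤ) :
    (∀ x y, bookAdj m n x y → unmix a b g x ≠ sigmaL m n 1 x y * unmix a b g y) ↔
      (a ≠ b ∧ ∀ i : Fin n, pOK (if (i:ℕ) = 0 then -a else a) (g i) b) := by
  have ht : 0 < m - 2 := by omega
  constructor
  · intro h
    refine ⟨?_, fun i => ?_⟩
    · have := h (Sum.inl false) (Sum.inl true) (by simp [bookAdj])
      simpa using this
    · rw [pOK_iff ht]
      refine ⟨?_, ?_, ?_⟩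
      · have h0 := h (Sum.inl false) (Sum.inr (i, ⟨0, ht⟩)) (by simp [bookAdj])
        simp only [sigmaL_ff, unmix_f, unmix_r] at h0
        by_cases hi : (i : ℕ) = 0
        · rw [if_pos hi]
          rw [if_pos ⟨by simp, by omega⟩] at h0
          intro hcon
          exact h0 (by rw [← hcon]; ring)
        · rw [if_neg hi]
          rw [if_neg (by intro hcon; exact hi (by omega))] at h0
          simpa using h0
      · intro j hj
        have hc := h (Sum.inr (i, ⟨j, by omega⟩)) (Sum.inr (i, ⟨j+1, hj⟩))
          (by simp [bookAdj])
        simpa using hc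
      · have hl := h (Sum.inr (i, ⟨m-2-1, by omega⟩)) (Sum.inl true)
          (by simp [bookAdj]; omega)
        simpa using hl
  · rintro ⟨hab, hpages⟩ x y hadj
    have hp : ∀ i : Fin n, _ := fun i => (pOK_iff ht _ _ (g i)).mp (hpages i)
    rcases x with bx | ⟨i, j⟩ <;> rcases y with by' | ⟨i', j'⟩
    · cases bx <;> cases by'
      · exact absurd hadj (by simp [bookAdj])
      · simpa using hab
      · simpa using hab.symm
      · exact absurd hadj (by simp [bookAdj])
    · cases bx
      · -- u -- page head
        have hj : j' = ⟨0, ht⟩ := Fin.ext hadj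
        subst hj
        have h0 := (hp i').1
        simp only [sigmaL_ff, unmix_f, unmix_r]
        by_cases hi : (i' : ℕ) = 0
        · rw [if_pos ⟨by simp, by omega⟩]
          rw [if_pos hi] at h0
          intro hcon
          exact h0 (by rw [hcon]; ring)
        · rw [if_neg (by intro hcon; exact hi (by omega))]
          rw [if_neg hi] at h0
          simpa using h0
      · -- v -- page tail
        have hj : j' = ⟨m-2-1, by omega⟩ := Fin.ext (by simp [bookAdj] at hadj; omega)
        subst hj
        have hl := (hp i').2.2
        simp only [sigmaL_tt, sigmaL_tt', sigmaL_rr, unmix_f, unmix_t, unmix_r, one_mul]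
        exact hl.symm
    · cases by'
      · have hj : j = ⟨0, ht⟩ := Fin.ext hadj
        subst hj
        have h0 := (hp i).1
        simp only [sigmaL_ff', unmix_f, unmix_r]
        by_cases hi : (i : ℕ) = 0
        · rw [if_pos ⟨by simp, by omega⟩]
          rw [if_pos hi] at h0
          intro hcon
          exact h0 (by rw [hcon]; ring)
        · rw [if_neg (by intro hcon; exact hi (by omega))]
          rw [if_neg hi] at h0
          rw [one_mul]
          exact fun hcon => h0 hcon.symm
      · have hj : j = ⟨m-2-1, by omega⟩ := Fin.ext (by simp [bookAdj] at hadj; omega)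
        subst hj
        have hl := (hp i).2.2
        simp only [sigmaL_tt, sigmaL_tt', sigmaL_rr, unmix_f, unmix_t, unmix_r, one_mul]
        exact hl
    · obtain ⟨rfl, h1 | h1⟩ := hadj
      · have e2 : j' = (⟨(j:ℕ)+1, by omega⟩ : Fin (m-2)) := Fin.ext (by simp; omega)
        rw [e2]
        have hch := (hp i).2.1 j.val (by omega)
        simpa using hch
      · have e2 : j = (⟨(j':ℕ)+1, by omega⟩ : Fin (m-2)) := Fin.ext (by simp; omega)
        rw [e2]
        have hch := (hp i).2.1 j'.val (by omega)
        simpa using hch.symm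


lemma mem_CC {k : ℕ} {z : ℤ} (h : |z| ≤ (k:ℤ)) : z ∈ Finset.Icc (-(k:ℤ)) (k:ℤ) := by
  rw [Finset.mem_Icc]; exact abs_le.mp h

lemma abs_CC {k : ℕ} (c : CC k) : |(c : ℤ)| ≤ (k:ℤ) :=
  abs_le.mpr (Finset.mem_Icc.mp c.2)

lemma unmix_eta {m n : ℕ} (c : BookVertex m n → ℤ) :
    unmix (c (Sum.inl false)) (c (Sum.inl true)) (fun i j => c (Sum.inr (i, j))) = c := by
  funext x
  rcases x with (_|_) | ⟨i, j⟩ <;> rfl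

noncomputable def mainEquiv (m n k : ℕ) (hm : 3 ≤ m) :
    {c : BookVertex m n → ℤ // (∀ x, |c x| ≤ (k : ℤ)) ∧
        ∀ x y, bookAdj m n x y → c x ≠ sigmaL m n 1 x y * c y} ≃
    Σ ab : {p : CC k × CC k // ((p.1 : ℤ)) ≠ ((p.2 : ℤ))},
      ∀ i : Fin n, {g : Fin (m-2) → CC k //
        pOK (if (i : ℕ) = 0 then -((ab.1.1 : ℤ)) else ((ab.1.1 : ℤ)))
          (fun j => ((g j : ℤ))) ((ab.1.2 : ℤ))} where
  toFun c :=
    ⟨⟨(⟨c.1 (Sum.inl false), mem_CC (c.2.1 _)⟩, ⟨c.1 (Sum.inl true), mem_CC (c.2.1 _)⟩), by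
        have h := c.2.2
        rw [← unmix_eta c.1] at h
        exact ((proper_iff hm _ _ _).mp h).1⟩,
      fun i => ⟨fun j => ⟨c.1 (Sum.inr (i, j)), mem_CC (c.2.1 _)⟩, by
        have h := c.2.2
        rw [← unmix_eta c.1] at h
        exact ((proper_iff hm _ _ _).mp h).2 i⟩⟩
  invFun q :=
    ⟨unmix ((q.1.1.1 : ℤ)) ((q.1.1.2 : ℤ)) (fun i j => (((q.2 i).1 j : ℤ))), by
      constructor
      · intro x
        rcases x with (_|_) | ⟨i, j⟩
        · exact abs_CC _
        · exact abs_CC _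
        · exact abs_CC _
      · exact (proper_iff hm _ _ _).mpr ⟨q.1.2, fun i => (q.2 i).2⟩⟩
  left_inv c := Subtype.ext (by
    funext x
    rcases x with (_|_) | ⟨i, j⟩ <;> rfl)
  right_inv q := rfl

lemma key_sum (k t : ℕ) :
    ∑ z ∈ Finset.Icc (-(k:ℤ)) (k:ℤ), ∑ w ∈ Finset.Icc (-(k:ℤ)) (k:ℤ),
      (if z ≠ w then (if -z = w then Dcl k t - (-1)^t else Dcl k t) else 0)
    = (2*(k:ℤ))^(t+2) := by
  have hinner : ∀ z ∈ Finset.Icc (-(k:ℤ)) (k:ℤ),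
      (∑ w ∈ Finset.Icc (-(k:ℤ)) (k:ℤ),
        (if z ≠ w then (if -z = w then Dcl k t - (-1)^t else Dcl k t) else 0))
      = 2*(k:ℤ)*Dcl k t + (if z ≠ 0 then -(-1)^t else 0) := by
    intro z hz
    rw [← Finset.sum_filter, Finset.filter_ne _ z]
    have step2 : ∀ w ∈ (Finset.Icc (-(k:ℤ)) (k:ℤ)).erase z,
        (if -z = w then Dcl k t - (-1)^t else Dcl k t)
          = Dcl k t + (if -z = w then -(-1)^t else 0) := by
      intro w _; split_ifs <;> ring
    rw [Finset.sum_congr rfl step2, Finset.sum_add_distrib, Finset.sum_const,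
      Finset.sum_ite_eq, Finset.card_erase_of_mem hz, card_Icc_k]
    have hmz : -z ∈ Finset.Icc (-(k:ℤ)) (k:ℤ) := by
      rw [Finset.mem_Icc] at hz ⊢; omega
    have hmem : -z ∈ (Finset.Icc (-(k:ℤ)) (k:ℤ)).erase z ↔ z ≠ 0 := by
      rw [Finset.mem_erase]
      constructor
      · intro h hc; exact h.1 (by rw [hc]; ring_nf)
      · intro h; exact ⟨by omega, hmz⟩
    by_cases hz0 : z = 0
    · rw [if_neg (by rw [hmem]; exact fun h => h hz0), if_neg (by exact fun h => h hz0)]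
      push_cast; ring
    · rw [if_pos (hmem.mpr hz0), if_pos hz0]
      push_cast; ring
  rw [Finset.sum_congr rfl hinner, Finset.sum_add_distrib, Finset.sum_const, card_Icc_k,
    ← Finset.sum_filter, Finset.filter_ne', Finset.sum_const,
    Finset.card_erase_of_mem (by rw [Finset.mem_Icc]; omega : (0:ℤ) ∈ Finset.Icc (-(k:ℤ)) (k:ℤ)),
    card_Icc_k]
  have hD := Dcl_mul k t
  simp only [nsmul_eq_mul]
  push_cast
  linear_combination (2*(k:ℤ)) * hD

/-- The number of proper colorings of the signed book graph `(B(m,n), σ_1)` with color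
set `{-k, …, -1, 0, 1, …, k}` is `(2k)^m · γ_m(2k+1)^{n-1}`. -/
theorem statement10 (m n : ℕ) (hm : 3 ≤ m) (hn : 1 ≤ n) (k : ℕ) :
    (Nat.card {c : BookVertex m n → ℤ //
        (∀ x, |c x| ≤ (k : ℤ)) ∧
        ∀ x y, bookAdj m n x y → c x ≠ sigmaL m n 1 x y * c y} : ℤ) =
      (2 * (k : ℤ)) ^ m * gammaP m (2 * (k : ℤ) + 1) ^ (n - 1) := by
  classical
  rw [Nat.card_congr (mainEquiv m n k hm), natCard_sigma]
  have hpage : ∀ ab : {p : CC k × CC k // ((p.1 : ℤ)) ≠ ((p.2 : ℤ))},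
      Nat.card (∀ i : Fin n, {g : Fin (m-2) → CC k //
        pOK (if (i : ℕ) = 0 then -((ab.1.1 : ℤ)) else ((ab.1.1 : ℤ)))
          (fun j => ((g j : ℤ))) ((ab.1.2 : ℤ))})
        = Npath k (m-2) (-((ab.1.1 : ℤ))) ((ab.1.2 : ℤ)) *
            Npath k (m-2) ((ab.1.1 : ℤ)) ((ab.1.2 : ℤ)) ^ (n-1) := by
    intro ab
    rw [Nat.card_pi]
    obtain ⟨n', rfl⟩ : ∃ n', n = n' + 1 := ⟨n-1, by omega⟩
    rw [Fin.prod_univ_succ]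
    simp only [Fin.val_zero, Fin.val_succ, Nat.succ_ne_zero, if_true, if_false, ite_true,
      ite_false, reduceIte]
    rw [Finset.prod_const, Finset.card_univ, Fintype.card_fin]
    rfl
  rw [Finset.sum_congr rfl (fun ab _ => hpage ab)]
  push_cast
  have hval : ∀ ab : {p : CC k × CC k // ((p.1 : ℤ)) ≠ ((p.2 : ℤ))},
      ((Npath k (m-2) (-((ab.1.1 : ℤ))) ((ab.1.2 : ℤ)) : ℤ) *
        (Npath k (m-2) ((ab.1.1 : ℤ)) ((ab.1.2 : ℤ)) : ℤ) ^ (n-1))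
      = (if -((ab.1.1 : ℤ)) = ((ab.1.2 : ℤ)) then Dcl k (m-2) - (-1)^(m-2) else Dcl k (m-2))
          * Dcl k (m-2) ^ (n-1) := by
    intro ab
    rw [Npath_eq k (m-2) (by simpa using abs_CC ab.1.1) (abs_CC ab.1.2),
      Npath_eq k (m-2) (abs_CC ab.1.1) (abs_CC ab.1.2), if_neg ab.2]
  rw [Finset.sum_congr rfl (fun ab _ => hval ab)]
  rw [← Finset.sum_subtype
    (Finset.univ.filter (fun p : CC k × CC k => ((p.1 : ℤ)) ≠ ((p.2 : ℤ)))) (by simp)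
    (fun p : CC k × CC k =>
      (if -((p.1 : ℤ)) = ((p.2 : ℤ)) then Dcl k (m-2) - (-1)^(m-2) else Dcl k (m-2))
        * Dcl k (m-2) ^ (n-1)),
    Finset.sum_filter, Fintype.sum_prod_type]
  have hcoe : ∀ A : CC k, (∑ B : CC k,
      if ((A : ℤ)) ≠ ((B : ℤ)) then
        (if -((A : ℤ)) = ((B : ℤ)) then Dcl k (m-2) - (-1)^(m-2) else Dcl k (m-2))
          * Dcl k (m-2) ^ (n-1) else 0)
      = ∑ w ∈ Finset.Icc (-(k:ℤ)) (k:ℤ),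
        (if ((A : ℤ)) ≠ w then
          (if -((A : ℤ)) = w then Dcl k (m-2) - (-1)^(m-2) else Dcl k (m-2))
            * Dcl k (m-2) ^ (n-1) else 0) :=
    fun A => Finset.sum_coe_sort (Finset.Icc (-(k:ℤ)) (k:ℤ))
      (fun w => if ((A : ℤ)) ≠ w then
          (if -((A : ℤ)) = w then Dcl k (m-2) - (-1)^(m-2) else Dcl k (m-2))
            * Dcl k (m-2) ^ (n-1) else 0)
  rw [Finset.sum_congr rfl (fun A _ => hcoe A),
    Finset.sum_coe_sort (Finset.Icc (-(k:ℤ)) (k:ℤ))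
      (fun z => ∑ w ∈ Finset.Icc (-(k:ℤ)) (k:ℤ),
        (if z ≠ w then
          (if -z = w then Dcl k (m-2) - (-1)^(m-2) else Dcl k (m-2))
            * Dcl k (m-2) ^ (n-1) else 0))]
  have hsplit : ∀ z ∈ Finset.Icc (-(k:ℤ)) (k:ℤ), ∀ w ∈ Finset.Icc (-(k:ℤ)) (k:ℤ),
      (if z ≠ w then
        (if -z = w then Dcl k (m-2) - (-1)^(m-2) else Dcl k (m-2)) * Dcl k (m-2) ^ (n-1) else 0)
      = (if z ≠ w then
          (if -z = w then Dcl k (m-2) - (-1)^(m-2) else Dcl k (m-2)) else 0)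
          * Dcl k (m-2) ^ (n-1) := by
    intro z _ w _; split_ifs <;> ring
  rw [Finset.sum_congr rfl (fun z hz => Finset.sum_congr rfl (fun w hw => hsplit z hz w hw))]
  simp only [← Finset.sum_mul]
  rw [key_sum k (m-2), show m - 2 + 2 = m from by omega]
  have hg : gammaP m (2*(k:ℤ)+1) = Dcl k (m-2) := by
    unfold gammaP Dcl
    rw [show m - 2 + 1 = m - 1 from by omega]
    exact Finset.sum_congr rfl fun i _ => by norm_num
  rw [hg]
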